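/- arXiv:0803.0049 — 2 statements merged into one kernel-verified Lean document; each statement's English description precedes it below -/
import Mathlib

section
/- Let Ω be a union of n disjoint intervals of total length 1, spectral with spectrum Λ containing 0. If a, a+d, ..., a+(2n−1)d ∈ Λ for some reals a and d > 0, then the full arithmetic progression a + dℤ is contained in Λ; moreover d ∈ ℤ and Ω d-tiles ℝ. -/
open MeasureTheory

/-- `Λ` is a spectrum for `Ω`: the exponentials `e^{2πiλx}`, `λ ∈ Λ`, restricted to `Ω`,
are mutually orthogonal and complete in `L²(Ω)`. -/
def IsSpectrum (Ω Λ : Set ℝ) : Prop :=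
  (∀ l ∈ Λ, ∀ m ∈ Λ, l ≠ m →
      (∫ x in Ω, Complex.exp (2 * (Real.pi : ℂ) * Complex.I * ((l : ℂ) - (m : ℂ)) * (x : ℂ))) = 0) ∧
  (∀ f : ℝ → ℂ, MemLp f 2 (volume.restrict Ω) →
      (∀ l ∈ Λ,
        (∫ x in Ω, f x * Complex.exp (-(2 * (Real.pi : ℂ) * Complex.I * (l : ℂ) * (x : ℂ)))) = 0) →
      f =ᵐ[volume.restrict Ω] 0)

open Complex Real

noncomputable def Fc (Ω : Set ℝ) (ξ : ℝ) : ℂ :=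
  ∫ x in Ω, Complex.exp (2 * (Real.pi : ℂ) * Complex.I * (ξ : ℂ) * (x : ℂ))

lemma norm_exp_eq_one (ξ x : ℝ) : ‖Complex.exp (2 * (Real.pi : ℂ) * Complex.I * (ξ : ℂ) * (x : ℂ))‖ = 1 := by
  have : 2 * (Real.pi : ℂ) * Complex.I * (ξ : ℂ) * (x : ℂ) = ((2 * Real.pi * ξ * x : ℝ) : ℂ) * Complex.I := by
    push_cast; ring
  rw [this]
  exact Complex.norm_exp_ofReal_mul_I _

lemma integrableOn_exp' (ξ : ℝ) {s : Set ℝ} (hfin : volume s ≠ ⊤) :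
    IntegrableOn (fun x : ℝ => Complex.exp (2 * (Real.pi : ℂ) * Complex.I * (ξ : ℂ) * (x : ℂ))) s := by
  haveI : IsFiniteMeasure (volume.restrict s) :=
    ⟨by rwa [Measure.restrict_apply_univ, lt_top_iff_ne_top]⟩
  refine Integrable.mono' (integrable_const 1) ?_ ?_
  · exact (Continuous.aestronglyMeasurable (by continuity))
  · exact Filter.Eventually.of_forall fun x => le_of_eq (norm_exp_eq_one ξ x)

set_option maxHeartbeats 1000000 in
lemma tiling_of_Fzero (Ω : Set ℝ) (hmeas : MeasurableSet Ω) (hvol : volume Ω = 1)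
    (A B : ℝ) (hAB : A ≤ B) (hsub : Ω ⊆ Set.Icc A B) (d : ℝ) (hd : 0 < d)
    (hFzero : ∀ k : ℤ, k ≠ 0 → Fc Ω ((k : ℝ) * d) = 0) :
    (∃ m : ℕ, 0 < m ∧ d = m) ∧
    (∀ᵐ x : ℝ ∂volume, ∑' k : ℤ, Ω.indicator (fun _ => (1 : ℝ)) (x + k / d) = d) := by
  classical
  set T : ℝ := 1 / d with hTdef
  have hT : 0 < T := by positivity
  have hTne : T ≠ 0 := ne_of_gt hT
  have hdne : d ≠ 0 := ne_of_gt hd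
  have hdc : (d : ℂ) ≠ 0 := by exact_mod_cast hdne
  haveI : Fact (0 < T) := ⟨hT⟩
  set φ : ℝ → ℝ := fun x => ∑' k : ℤ, Ω.indicator (fun _ => (1 : ℝ)) (x + k / d) with hφdef
  have hdiv : ∀ k : ℤ, (k : ℝ) / d = k * T := fun k => by rw [hTdef]; ring
  set klo : ℝ → ℤ := fun c => ⌈(A - c - T) / T⌉ with hklo
  set khi : ℝ → ℤ := fun c => ⌊(B - c) / T⌋ with hkhi
  set S : ℝ → Finset ℤ := fun c => Finset.Icc (klo c) (khi c) with hSdef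
  -- membership of x in its own Ioc window
  have hIocmem : ∀ x : ℝ, x ∈ Set.Ioc (((⌈x / T⌉ - 1 : ℤ) : ℝ) * T) (((⌈x / T⌉ - 1 : ℤ) : ℝ) * T + T) := by
    intro x
    constructor
    · have h1 : ((⌈x / T⌉ : ℝ) - 1) < x / T := by
        have := Int.ceil_lt_add_one (x / T); linarith
      have := (mul_lt_mul_of_pos_right h1 hT)
      rw [div_mul_cancel₀ _ hTne] at this
      push_cast
      linarith
    · have h2 : x / T ≤ ((⌈x / T⌉ : ℝ)) := Int.le_ceil _
      have := (mul_le_mul_of_nonneg_right h2 hT.le)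
      rw [div_mul_cancel₀ _ hTne] at this
      push_cast
      linarith
  have hout : ∀ c x, x ∈ Set.Ico c (c + T) → ∀ k : ℤ, k ∉ S c → x + (k : ℝ) * T ∉ Ω := by
    intro c x hx k hk hmem
    obtain ⟨hA, hB⟩ := hsub hmem
    rw [hSdef, Finset.mem_Icc, not_and_or] at hk
    rcases hk with hk | hk
    · push_neg at hk
      have hk1 : (k : ℤ) ≤ klo c - 1 := by omega
      have h2 : ((klo c : ℝ) - 1) < (A - c - T) / T := by
        have := Int.ceil_lt_add_one ((A - c - T) / T)
        rw [hklo]; push_cast at this ⊢; linarith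
      have h1 : (k : ℝ) < (A - c - T) / T := by
        have : (k : ℝ) ≤ (klo c : ℝ) - 1 := by exact_mod_cast hk1
        linarith
      have h3 : (k : ℝ) * T < A - c - T := by
        have := mul_lt_mul_of_pos_right h1 hT
        rwa [div_mul_cancel₀ _ hTne] at this
      have := hx.2
      linarith
    · push_neg at hk
      have hk1 : khi c + 1 ≤ k := by omega
      have h2 : (B - c) / T < (khi c : ℝ) + 1 := by
        have := Int.lt_floor_add_one ((B - c) / T)
        rw [hkhi]; push_cast at this ⊢; linarith
      have h1 : (B - c) / T < (k : ℝ) := by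
        have : ((khi c : ℝ) + 1) ≤ (k : ℝ) := by exact_mod_cast hk1
        linarith
      have h3 : B - c < (k : ℝ) * T := by
        have := mul_lt_mul_of_pos_right h1 hT
        rwa [div_mul_cancel₀ _ hTne] at this
      have := hx.1
      linarith
  have φrep : ∀ c x, x ∈ Set.Ico c (c + T) →
      φ x = ∑ k ∈ S c, Ω.indicator (fun _ => (1 : ℝ)) (x + (k : ℝ) * T) := by
    intro c x hx
    show (∑' k : ℤ, Ω.indicator (fun _ => (1 : ℝ)) (x + (k : ℝ) / d)) = _
    simp only [hdiv]
    exact tsum_eq_sum (fun k hk => Set.indicator_of_notMem (hout c x hx k hk) _)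
  have hcard : ∀ c : ℝ, ((S c).card : ℝ) ≤ (B - A) / T + 2 := by
    intro c
    have hBA : (0 : ℝ) ≤ (B - A) / T := div_nonneg (by linarith) hT.le
    rw [hSdef]
    rcases le_or_gt (klo c) (khi c) with hle | hlt
    · rw [Int.card_Icc]
      have h1 : ((khi c : ℝ)) ≤ (B - c) / T := Int.floor_le _
      have h2 : (A - c - T) / T ≤ (klo c : ℝ) := Int.le_ceil _
      have hc : ((Int.toNat (khi c + 1 - klo c) : ℝ)) = ((khi c : ℝ) + 1 - klo c) := by
        exact_mod_cast congrArg (Int.cast : ℤ → ℝ) (Int.toNat_of_nonneg (by omega))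
      rw [hc]
      have hsplit : (B - c) / T - (A - c - T) / T = (B - A) / T + 1 := by
        field_simp
        ring
      linarith
    · rw [Int.card_Icc]
      have h0 : khi c + 1 - klo c ≤ 0 := by omega
      rw [Int.toNat_of_nonpos h0]
      simp
      linarith
  have hφbound : ∀ x : ℝ, ‖((φ x : ℝ) : ℂ)‖ ≤ (B - A) / T + 2 := by
    intro x
    rw [Complex.norm_real]
    rw [Real.norm_eq_abs, φrep x x ⟨le_refl x, by linarith⟩]
    calc |∑ k ∈ S x, Ω.indicator (fun _ => (1 : ℝ)) (x + (k : ℝ) * T)|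
        ≤ ∑ k ∈ S x, |Ω.indicator (fun _ => (1 : ℝ)) (x + (k : ℝ) * T)| :=
          Finset.abs_sum_le_sum_abs _ _
      _ ≤ ∑ _k ∈ S x, (1 : ℝ) := by
          refine Finset.sum_le_sum fun k _ => ?_
          by_cases h : x + (k : ℝ) * T ∈ Ω <;>
            simp [Set.indicator_of_mem, Set.indicator_of_notMem, h]
      _ = ((S x).card : ℝ) := by simp
      _ ≤ _ := hcard x
  have hper : Function.Periodic (fun x : ℝ => ((φ x : ℝ) : ℂ)) T := by
    intro x
    have h1 : φ (x + T) = φ x := by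
      show (∑' k : ℤ, Ω.indicator (fun _ => (1:ℝ)) (x + T + (k:ℝ) / d))
        = ∑' k : ℤ, Ω.indicator (fun _ => (1:ℝ)) (x + (k:ℝ) / d)
      simp only [hdiv]
      have he := Equiv.tsum_eq (Equiv.addRight (1 : ℤ))
        (fun k : ℤ => Ω.indicator (fun _ => (1 : ℝ)) (x + (k : ℝ) * T))
      rw [← he]
      congr 1
      funext k
      have : x + T + (k : ℝ) * T = x + ((Equiv.addRight (1 : ℤ)) k : ℝ) * T := by
        simp [Equiv.coe_addRight]; push_cast; ring
      rw [this]
    simp [h1]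
  set ψ : ℝ → ℂ := fun x => ∑ k ∈ S 0, Ω.indicator (fun _ => (1 : ℂ)) (x + (k : ℝ) * T) with hψdef
  have hψmeas : Measurable ψ := by
    apply Finset.measurable_sum
    intro k _
    exact (measurable_const.indicator hmeas).comp (measurable_add_const ((k : ℝ) * T))
  have hφψ : ∀ x ∈ Set.Ico (0 : ℝ) (0 + T), ((φ x : ℝ) : ℂ) = ψ x := by
    intro x hx
    rw [φrep 0 x hx, hψdef]
    push_cast
    refine Finset.sum_congr rfl fun k _ => ?_
    by_cases h : x + (k : ℝ) * T ∈ Ω <;>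
      simp [Set.indicator_of_mem, Set.indicator_of_notMem, h]
  set h : AddCircle T → ℂ := hper.lift with hhdef
  have hcoe : ∀ x : ℝ, h ↑x = ((φ x : ℝ) : ℂ) := fun x => hper.lift_coe x
  have hrepr : ∀ z : AddCircle T, ∃ x : ℝ, x ∈ Set.Ico 0 (0 + T) ∧ z = ↑x := by
    intro z
    refine ⟨(AddCircle.equivIco T 0 z : ℝ), (AddCircle.equivIco T 0 z).2, ?_⟩
    exact ((AddCircle.equivIco T 0).symm_apply_apply z).symm
  have heq : h = AddCircle.liftIco T 0 ψ := by
    funext z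
    obtain ⟨x, hx, rfl⟩ := hrepr z
    rw [hcoe, AddCircle.liftIco_coe_apply hx, hφψ x hx]
  have hmeash : Measurable h := by
    rw [heq]
    exact (hψmeas.comp measurable_subtype_coe).comp (AddCircle.measurableEquivIco T 0).measurable
  have hbound : ∀ z : AddCircle T, ‖h z‖ ≤ (B - A) / T + 2 := by
    intro z
    obtain ⟨x, hx, rfl⟩ := hrepr z
    rw [hcoe]
    exact hφbound x
  have hmemh : MemLp h 2 AddCircle.haarAddCircle :=
    MemLp.of_bound hmeash.aestronglyMeasurable _ (Filter.Eventually.of_forall hbound)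
  have hcoeff : ∀ nn : ℤ, fourierCoeff h nn = (d : ℂ) * Fc Ω (-(nn : ℝ) * d) := by
    intro nn
    set ξn : ℝ := -(nn : ℝ) * d with hξn
    have hfour : ∀ x : ℝ, (fourier (-nn) (x : AddCircle T) : ℂ)
        = Complex.exp (2 * (Real.pi : ℂ) * Complex.I * (ξn : ℂ) * (x : ℂ)) := by
      intro x
      rw [fourier_coe_apply]
      congr 1
      rw [hξn, hTdef]
      push_cast
      field_simp
    have hone : ∀ k : ℤ,
        Complex.exp (2 * (Real.pi : ℂ) * Complex.I * (ξn : ℂ) * (((k : ℝ) * T : ℝ) : ℂ)) = 1 := by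
      intro k
      have harg : 2 * (Real.pi : ℂ) * Complex.I * (ξn : ℂ) * (((k : ℝ) * T : ℝ) : ℂ)
          = ((-nn * k : ℤ) : ℂ) * (2 * (Real.pi : ℂ) * Complex.I) := by
        rw [hξn, hTdef]
        push_cast
        field_simp
      rw [harg, Complex.exp_int_mul_two_pi_mul_I]
    have hstep1 : fourierCoeff h nn
        = (1 / T : ℝ) • ∫ x in Set.Ioo (0:ℝ) (0+T), (fourier (-nn) (x : AddCircle T) : ℂ) * ψ x := by
      rw [fourierCoeff_eq_intervalIntegral h nn 0]
      congr 1
      rw [intervalIntegral.integral_of_le (by linarith), MeasureTheory.integral_Ioc_eq_integral_Ioo]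
      refine MeasureTheory.setIntegral_congr_fun measurableSet_Ioo fun x hx => ?_
      have hx' : x ∈ Set.Ico 0 (0+T) := ⟨hx.1.le, hx.2⟩
      show (fourier (-nn) (x : AddCircle T) : ℂ) • h ↑x = _
      rw [hcoe, hφψ x hx', smul_eq_mul]
    have hstep2 : (∫ x in Set.Ioo (0:ℝ) (0+T), (fourier (-nn) (x : AddCircle T) : ℂ) * ψ x)
        = ∑ k ∈ S 0, ∫ x in Set.Ioo (0:ℝ) (0+T),
            (fourier (-nn) (x : AddCircle T) : ℂ) * Ω.indicator (fun _ => (1:ℂ)) (x + (k:ℝ) * T) := by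
      rw [hψdef]
      simp_rw [Finset.mul_sum]
      apply MeasureTheory.integral_finset_sum
      intro k _
      haveI : IsFiniteMeasure (volume.restrict (Set.Ioo (0:ℝ) (0+T))) := by
        constructor
        rw [Measure.restrict_apply_univ, Real.volume_Ioo]
        exact ENNReal.ofReal_lt_top
      apply Integrable.mono' (integrable_const (1:ℝ))
      · apply AEStronglyMeasurable.mul
        · exact ((map_continuous (fourier (-nn))).comp
            (AddCircle.continuous_mk' T)).aestronglyMeasurable.restrict
        · exact ((measurable_const.indicator hmeas).comp
            (measurable_add_const _)).aestronglyMeasurable.restrict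
      · refine Filter.Eventually.of_forall fun x => ?_
        rw [norm_mul]
        have h1 : ‖(fourier (-nn) (x : AddCircle T) : ℂ)‖ = 1 := Circle.norm_coe _
        have h2 : ‖Ω.indicator (fun _ => (1:ℂ)) (x + (k:ℝ)*T)‖ ≤ 1 := by
          by_cases hm : x + (k:ℝ)*T ∈ Ω <;>
            simp [Set.indicator_of_mem, Set.indicator_of_notMem, hm]
        rw [h1, one_mul]
        exact h2
    set G : ℝ → ℂ := Ω.indicator (fun y' : ℝ => Complex.exp (2 * (Real.pi : ℂ) * Complex.I * (ξn : ℂ) * (y' : ℂ))) with hG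
    have hstep3 : ∀ k : ℤ, (∫ x in Set.Ioo (0:ℝ) (0+T),
          (fourier (-nn) (x : AddCircle T) : ℂ) * Ω.indicator (fun _ => (1:ℂ)) (x + (k:ℝ) * T))
        = ∫ y in Set.Ioc ((k:ℝ)*T) ((k:ℝ)*T + T), G y := by
      intro k
      have hptwise : ∀ x ∈ Set.Ioo (0:ℝ) (0+T),
          (fourier (-nn) (x : AddCircle T) : ℂ) * Ω.indicator (fun _ => (1:ℂ)) (x + (k:ℝ) * T)
          = G (x + (k:ℝ) * T) := by
        intro x _
        rw [hfour, hG]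
        by_cases hmem2 : x + (k:ℝ)*T ∈ Ω
        · rw [Set.indicator_of_mem hmem2, Set.indicator_of_mem hmem2, mul_one]
          rw [show ((x + (k:ℝ)*T : ℝ) : ℂ) = (x : ℂ) + (((k:ℝ)*T : ℝ) : ℂ) by push_cast; ring]
          rw [mul_add, Complex.exp_add, hone k, mul_one]
        · rw [Set.indicator_of_notMem hmem2, Set.indicator_of_notMem hmem2, mul_zero]
      rw [MeasureTheory.setIntegral_congr_fun measurableSet_Ioo hptwise]
      rw [← MeasureTheory.integral_Ioc_eq_integral_Ioo,
        ← intervalIntegral.integral_of_le (by linarith : (0:ℝ) ≤ 0 + T)]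
      rw [intervalIntegral.integral_comp_add_right G ((k:ℝ)*T)]
      have hb1 : (0:ℝ) + (k:ℝ)*T = (k:ℝ)*T := by ring
      have hb2 : (0:ℝ) + T + (k:ℝ)*T = (k:ℝ)*T + T := by ring
      rw [hb1, hb2, intervalIntegral.integral_of_le (by linarith : (k:ℝ)*T ≤ (k:ℝ)*T + T)]
    have hstep4 : (∑ k ∈ S 0, ∫ y in Set.Ioc ((k:ℝ)*T) ((k:ℝ)*T + T), G y) = Fc Ω ξn := by
      have h1 : ∀ k : ℤ, (∫ y in Set.Ioc ((k:ℝ)*T) ((k:ℝ)*T + T), G y)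
          = ∫ y in Set.Ioc ((k:ℝ)*T) ((k:ℝ)*T + T) ∩ Ω,
              Complex.exp (2 * (Real.pi : ℂ) * Complex.I * (ξn : ℂ) * (y : ℂ)) := by
        intro k
        rw [hG, MeasureTheory.setIntegral_indicator hmeas]
      simp_rw [h1]
      have hUnion : (⋃ k ∈ S 0, (Set.Ioc ((k:ℝ)*T) ((k:ℝ)*T + T) ∩ Ω)) = Ω := by
        apply Set.Subset.antisymm
        · exact Set.iUnion₂_subset fun k _ => Set.inter_subset_right
        · intro y hy
          obtain ⟨hA2, hB2⟩ := hsub hy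
          have hlow := (hIocmem y).1
          have hhigh := (hIocmem y).2
          have hk : (⌈y / T⌉ - 1) ∈ S 0 := by
            rw [hSdef, Finset.mem_Icc]
            constructor
            · rw [hklo]
              apply Int.ceil_le.mpr
              push_cast
              rw [div_le_iff₀ hT]
              push_cast at hhigh
              linarith
            · rw [hkhi]
              apply Int.le_floor.mpr
              push_cast
              rw [le_div_iff₀ hT]
              push_cast at hlow
              linarith
          exact Set.mem_biUnion hk ⟨hIocmem y, hy⟩
      have hbi := MeasureTheory.integral_biUnion_finset (μ := volume) (S 0)
        (s := fun k : ℤ => Set.Ioc ((k:ℝ)*T) ((k:ℝ)*T + T) ∩ Ω)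
        (f := fun y : ℝ => Complex.exp (2 * (Real.pi : ℂ) * Complex.I * (ξn : ℂ) * (y : ℂ)))
        (fun k _ => measurableSet_Ioc.inter hmeas)
        (by
          intro i _ j _ hij
          apply Set.disjoint_left.mpr
          rintro y ⟨⟨h1a, h1b⟩, _⟩ ⟨⟨h2a, h2b⟩, _⟩
          rcases lt_or_gt_of_ne hij with hlt | hlt
          · have hij' : ((i:ℝ) + 1) ≤ (j:ℝ) := by exact_mod_cast hlt
            have hmul : ((i:ℝ) + 1) * T ≤ (j:ℝ) * T := mul_le_mul_of_nonneg_right hij' hT.le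
            nlinarith
          · have hij' : ((j:ℝ) + 1) ≤ (i:ℝ) := by exact_mod_cast hlt
            have hmul : ((j:ℝ) + 1) * T ≤ (i:ℝ) * T := mul_le_mul_of_nonneg_right hij' hT.le
            nlinarith)
        (by
          intro k _
          apply integrableOn_exp' ξn
          refine ne_of_lt (lt_of_le_of_lt (measure_mono Set.inter_subset_right) ?_)
          rw [hvol]
          exact ENNReal.one_lt_top)
      rw [Fc]
      conv_rhs => rw [← hUnion]
      exact hbi.symm
    rw [hstep1, hstep2]
    simp_rw [hstep3]
    rw [hstep4]
    rw [hTdef, one_div_one_div]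
    rw [Complex.real_smul]
  have hc0 : fourierCoeff h 0 = (d : ℂ) := by
    rw [hcoeff 0]
    have h00 : -((0:ℤ):ℝ) * d = 0 := by norm_num
    have hF0 : Fc Ω (-((0:ℤ):ℝ) * d) = 1 := by
      rw [h00, Fc]
      have hexp1 : ∀ x : ℝ, Complex.exp (2*(Real.pi:ℂ)*Complex.I*((0:ℝ):ℂ)*(x:ℂ)) = 1 := by
        intro x; norm_num
      simp only [hexp1]
      rw [MeasureTheory.setIntegral_const, measureReal_def, hvol]
      simp
    rw [hF0, mul_one]
  have hcn : ∀ nn : ℤ, nn ≠ 0 → fourierCoeff h nn = 0 := by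
    intro nn hnn
    rw [hcoeff nn]
    have hcast : -(nn:ℝ) * d = ((-nn : ℤ):ℝ) * d := by push_cast; ring
    rw [hcast, hFzero (-nn) (neg_ne_zero.mpr hnn), mul_zero]
  have hconst0 : fourierCoeff (fun _ : AddCircle T => (d:ℂ)) 0 = (d:ℂ) := by
    rw [fourierCoeff_eq_intervalIntegral _ 0 0]
    simp only [neg_zero, fourier_zero, one_smul]
    rw [intervalIntegral.integral_const, smul_smul]
    have hone' : (1/T) * ((0:ℝ)+T-0) = 1 := by field_simp; ring
    rw [hone', one_smul]
  have hconstn : ∀ nn : ℤ, nn ≠ 0 → fourierCoeff (fun _ : AddCircle T => (d:ℂ)) nn = 0 := by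
    intro nn hnn
    rw [fourierCoeff_eq_intervalIntegral _ nn 0]
    have hTc : (T:ℂ) ≠ 0 := by exact_mod_cast hTne
    have hnc : ((nn:ℤ):ℂ) ≠ 0 := by exact_mod_cast hnn
    have hcne : (2*(Real.pi:ℂ)*Complex.I*(-(nn:ℂ))/(T:ℂ)) ≠ 0 := by
      apply div_ne_zero _ hTc
      apply mul_ne_zero
      apply mul_ne_zero
      apply mul_ne_zero
      · norm_num
      · exact_mod_cast Real.pi_ne_zero
      · exact Complex.I_ne_zero
      · exact neg_ne_zero.mpr hnc
    have hptwise : ∀ x : ℝ, (fourier (-nn) (x : AddCircle T) : ℂ) • (d:ℂ)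
        = Complex.exp ((2*(Real.pi:ℂ)*Complex.I*(-(nn:ℂ))/(T:ℂ)) * (x:ℂ)) * d := by
      intro x
      rw [smul_eq_mul, fourier_coe_apply]
      congr 2
      push_cast
      ring
    simp_rw [hptwise]
    rw [intervalIntegral.integral_mul_const, integral_exp_mul_complex hcne]
    have harg1 : (2*(Real.pi:ℂ)*Complex.I*(-(nn:ℂ))/(T:ℂ)) * (((0:ℝ)+T : ℝ):ℂ)
        = ((-nn : ℤ):ℂ) * (2*(Real.pi:ℂ)*Complex.I) := by
      rw [show (((0:ℝ)+T : ℝ):ℂ) = (T:ℂ) by push_cast; ring]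
      rw [div_mul_cancel₀ _ hTc]
      push_cast
      ring
    have harg0 : (2*(Real.pi:ℂ)*Complex.I*(-(nn:ℂ))/(T:ℂ)) * (((0:ℝ) : ℝ):ℂ) = 0 := by
      push_cast
      ring
    rw [harg1, harg0, Complex.exp_int_mul_two_pi_mul_I, Complex.exp_zero]
    simp only [sub_self, zero_div, zero_mul, smul_zero]
  set h' : AddCircle T → ℂ := fun z => h z - (d:ℂ) with hh'def
  have hmemh' : MemLp h' 2 AddCircle.haarAddCircle := hmemh.sub (memLp_const _)
  have hcoeff' : ∀ nn : ℤ, fourierCoeff h' nn = 0 := by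
    intro nn
    have hi1 : Integrable (fun z : AddCircle T => (fourier (-nn) z : ℂ) * h z)
        AddCircle.haarAddCircle := by
      apply Integrable.bdd_mul (c := 1) (hmemh.integrable one_le_two)
      · exact (map_continuous (fourier (-nn))).aestronglyMeasurable
      · exact Filter.Eventually.of_forall fun z => le_of_eq (Circle.norm_coe _)
    have hi2 : Integrable (fun z : AddCircle T => (fourier (-nn) z : ℂ) * (d:ℂ))
        AddCircle.haarAddCircle := by
      apply Integrable.bdd_mul (c := 1) (integrable_const _)
      · exact (map_continuous (fourier (-nn))).aestronglyMeasurable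
      · exact Filter.Eventually.of_forall fun z => le_of_eq (Circle.norm_coe _)
    have hsplit : fourierCoeff h' nn
        = fourierCoeff h nn - fourierCoeff (fun _ : AddCircle T => (d:ℂ)) nn := by
      show (∫ z : AddCircle T, fourier (-nn) z • (h z - (d:ℂ)) ∂AddCircle.haarAddCircle) = _
      simp_rw [smul_sub]
      rw [integral_sub]
      · rfl
      · simpa [smul_eq_mul] using hi1
      · simpa [smul_eq_mul] using hi2
    rcases eq_or_ne nn 0 with rfl | hnn
    · rw [hsplit, hc0, hconst0, sub_self]
    · rw [hsplit, hcn nn hnn, hconstn nn hnn, sub_self]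
  have htoLp : hmemh'.toLp h' = 0 := by
    have hrepr0 : fourierBasis.repr (hmemh'.toLp h') = 0 := by
      ext nn
      rw [fourierBasis_repr]
      have hae2 := hmemh'.coeFn_toLp
      have hcg : fourierCoeff (↑(hmemh'.toLp h') : AddCircle T → ℂ) nn = fourierCoeff h' nn := by
        exact integral_congr_ae
          (hae2.mono fun z hz => congrArg (fun w => (fourier (-nn) z : ℂ) • w) hz)
      rw [hcg, hcoeff' nn]
      simp
    have := fourierBasis.repr.injective
      (by rw [hrepr0, map_zero] :
        fourierBasis.repr (hmemh'.toLp h') = fourierBasis.repr 0)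
    exact this
  have haeh' : h' =ᵐ[AddCircle.haarAddCircle] (fun _ => (0:ℂ)) :=
    (MemLp.toLp_eq_toLp_iff hmemh' MemLp.zero').mp (by rw [htoLp]; exact (MemLp.toLp_zero MemLp.zero).symm)
  have hnullhaar : AddCircle.haarAddCircle (h ⁻¹' {(d:ℂ)}ᶜ) = 0 := by
    have hae3 : ∀ᵐ z ∂AddCircle.haarAddCircle, h' z = 0 := haeh'
    rw [ae_iff] at hae3
    have hseteq : h ⁻¹' {(d:ℂ)}ᶜ = {z | ¬ (h z - (d:ℂ) = 0)} := by
      ext z; simp [sub_eq_zero]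
    rw [hseteq]
    exact hae3
  have hnullvol : (volume : Measure (AddCircle T)) (h ⁻¹' {(d:ℂ)}ᶜ) = 0 := by
    rw [AddCircle.volume_eq_smul_haarAddCircle, Measure.smul_apply, hnullhaar, smul_zero]
  have hslice : ∀ m : ℤ, volume (((fun x : ℝ => ((φ x : ℝ):ℂ)) ⁻¹' {(d:ℂ)}ᶜ)
      ∩ Set.Ioc ((m:ℝ)*T) ((m:ℝ)*T + T)) = 0 := by
    intro m
    have hmp := AddCircle.measurePreserving_mk T ((m:ℝ)*T)
    have hpre := hmp.measure_preimage
      ((hmeash (measurableSet_singleton (d:ℂ)).compl).nullMeasurableSet)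
    rw [Measure.restrict_apply' measurableSet_Ioc] at hpre
    have hseteq : (((↑) : ℝ → AddCircle T) ⁻¹' (h ⁻¹' {(d:ℂ)}ᶜ))
        = ((fun x : ℝ => ((φ x:ℝ):ℂ)) ⁻¹' {(d:ℂ)}ᶜ) := by
      ext x
      simp [Set.mem_preimage, hcoe x]
    rw [hseteq] at hpre
    rw [hpre, hnullvol]
  have hcover : ((fun x : ℝ => ((φ x:ℝ):ℂ)) ⁻¹' {(d:ℂ)}ᶜ)
      ⊆ ⋃ m : ℤ, (((fun x : ℝ => ((φ x:ℝ):ℂ)) ⁻¹' {(d:ℂ)}ᶜ)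
        ∩ Set.Ioc ((m:ℝ)*T) ((m:ℝ)*T + T)) :=
    fun x hx => Set.mem_iUnion.mpr ⟨⌈x/T⌉ - 1, hx, hIocmem x⟩
  have hnullφ : volume ((fun x : ℝ => ((φ x:ℝ):ℂ)) ⁻¹' {(d:ℂ)}ᶜ) = 0 :=
    measure_mono_null hcover (measure_iUnion_null hslice)
  have claim3 : ∀ᵐ x : ℝ ∂volume, φ x = d := by
    rw [ae_iff]
    have hseteq : {x : ℝ | ¬ φ x = d} = ((fun x : ℝ => ((φ x:ℝ):ℂ)) ⁻¹' {(d:ℂ)}ᶜ) := by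
      ext x
      simp
    rw [hseteq]
    exact hnullφ
  constructor
  · haveI : (MeasureTheory.ae (volume : Measure ℝ)).NeBot := by
      rw [ae_neBot]
      intro h0
      have hIoc : (volume : Measure ℝ) (Set.Ioc (0:ℝ) 1) = 0 := by rw [h0]; rfl
      rw [Real.volume_Ioc] at hIoc
      norm_num at hIoc
    obtain ⟨x0, hx0⟩ := claim3.exists
    rw [φrep x0 x0 ⟨le_refl _, by linarith⟩] at hx0
    have hsum : (∑ k ∈ S x0, Ω.indicator (fun _ => (1:ℝ)) (x0 + (k:ℝ)*T))
        = (((S x0).filter (fun k : ℤ => x0 + (k:ℝ)*T ∈ Ω)).card : ℝ) := by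
      simp only [Set.indicator_apply]
      rw [Finset.sum_boole]
    rw [hsum] at hx0
    refine ⟨((S x0).filter (fun k : ℤ => x0 + (k:ℝ)*T ∈ Ω)).card, ?_, hx0.symm⟩
    by_contra hm
    push_neg at hm
    have hzero : ((S x0).filter (fun k : ℤ => x0 + (k:ℝ)*T ∈ Ω)).card = 0 := by omega
    rw [hzero] at hx0
    simp at hx0
    linarith
  · exact claim3

noncomputable def gS {n : ℕ} (aI r : Fin n → ℝ) (ξ : ℝ) : ℂ :=
  ∑ j, (Complex.exp (2 * (Real.pi : ℂ) * Complex.I * (ξ : ℂ) * ((aI j : ℂ) + (r j : ℂ)))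
      - Complex.exp (2 * (Real.pi : ℂ) * Complex.I * (ξ : ℂ) * (aI j : ℂ)))

lemma gS_zero {n : ℕ} (aI r : Fin n → ℝ) : gS aI r 0 = 0 := by
  simp [gS]

lemma twoPiIxi_ne (ξ : ℝ) (hξ : ξ ≠ 0) : (2 * (Real.pi : ℂ) * Complex.I * (ξ : ℂ)) ≠ 0 := by
  apply mul_ne_zero
  apply mul_ne_zero
  apply mul_ne_zero
  · norm_num
  · exact_mod_cast Real.pi_ne_zero
  · exact Complex.I_ne_zero
  · exact_mod_cast hξ

open Finset in
lemma geom_vanish {ι : Type*} [Fintype ι] [DecidableEq ι] (c u : ι → ℂ)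
    (h : ∀ k : ℕ, k < Fintype.card ι → ∑ i, c i * u i ^ k = 0) :
    ∀ k : ℤ, ∑ i, c i * u i ^ k = 0 := by
  classical
  set T : Finset ℂ := Finset.image u Finset.univ with hT
  set D : ℕ := T.card with hD
  have hDle : D ≤ Fintype.card ι := by
    simpa [hD, hT] using Finset.card_image_le (s := (Finset.univ : Finset ι)) (f := u)
  set C : ℂ → ℂ := fun w => ∑ i ∈ Finset.univ.filter (fun i => u i = w), c i with hC
  have key : ∀ p : ℂ → ℂ, ∑ i, c i * p (u i) = ∑ w ∈ T, C w * p w := by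
    intro p
    rw [← Finset.sum_fiberwise_of_maps_to (g := u)
      (fun i _ => Finset.mem_image_of_mem u (Finset.mem_univ i)) (fun i => c i * p (u i))]
    refine Finset.sum_congr rfl fun w _ => ?_
    rw [hC, Finset.sum_mul]
    refine Finset.sum_congr rfl fun i hi => ?_
    rw [(Finset.mem_filter.mp hi).2]
  have e := T.equivFin.symm
  set v : Fin D → ℂ := fun i => ((e i : ℂ)) with hv
  have hvinj : Function.Injective v := by
    intro i j hij
    exact e.injective (Subtype.ext hij)
  have hsumT : ∀ (p : ℂ → ℂ), ∑ w ∈ T, C w * p w = ∑ i : Fin D, C (v i) * p (v i) := by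
    intro p
    rw [← Finset.sum_attach T (fun w => C w * p w)]
    exact (Equiv.sum_comp e.symm.symm (fun w => C (w : ℂ) * p (w : ℂ))).symm
  have hCzero : ∀ i : Fin D, C (v i) = 0 := by
    have := Matrix.eq_zero_of_forall_pow_sum_mul_pow_eq_zero (f := v)
      (v := fun i => C (v i)) hvinj ?_
    · intro i; exact congrFun this i
    · intro k
      have hk := h k (lt_of_lt_of_le k.2 hDle)
      rw [key (fun w => w ^ (k : ℕ)), hsumT] at hk
      exact hk
  intro k
  rw [key (fun w => w ^ k), hsumT (fun w => w ^ k)]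
  simp [hCzero]

lemma g_propagate {n : ℕ} (aI r : Fin n → ℝ) (t δ : ℝ)
    (h : ∀ k : ℕ, k < 2 * n → gS aI r (t + k * δ) = 0) :
    ∀ k : ℤ, gS aI r (t + k * δ) = 0 := by
  classical
  set c : Fin n ⊕ Fin n → ℂ := Sum.elim
    (fun j => -Complex.exp (2 * (Real.pi : ℂ) * Complex.I * (t : ℂ) * (aI j : ℂ)))
    (fun j => Complex.exp (2 * (Real.pi : ℂ) * Complex.I * (t : ℂ) * ((aI j : ℂ) + (r j : ℂ)))) with hc
  set u : Fin n ⊕ Fin n → ℂ := Sum.elim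
    (fun j => Complex.exp (2 * (Real.pi : ℂ) * Complex.I * (δ : ℂ) * (aI j : ℂ)))
    (fun j => Complex.exp (2 * (Real.pi : ℂ) * Complex.I * (δ : ℂ) * ((aI j : ℂ) + (r j : ℂ)))) with hu
  have hrep : ∀ k : ℤ, gS aI r (t + k * δ) = ∑ i, c i * u i ^ k := by
    intro k
    rw [Fintype.sum_sum_type]
    simp only [hc, hu, Sum.elim_inl, Sum.elim_inr]
    rw [gS, Finset.sum_sub_distrib]
    have key : ∀ b : ℂ, Complex.exp (2 * (Real.pi : ℂ) * Complex.I * ((t + (k : ℝ) * δ : ℝ) : ℂ) * b)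
        = Complex.exp (2 * (Real.pi : ℂ) * Complex.I * (t : ℂ) * b)
          * Complex.exp (2 * (Real.pi : ℂ) * Complex.I * (δ : ℂ) * b) ^ k := by
      intro b
      rw [← Complex.exp_int_mul, ← Complex.exp_add]
      congr 1
      push_cast
      ring
    simp only [key]
    rw [sub_eq_add_neg, ← Finset.sum_neg_distrib, add_comm]
    simp [neg_mul]
  intro k
  rw [hrep]
  apply geom_vanish
  intro k hk
  have hk2 : k < 2 * n := by simp [Fintype.card_sum] at hk; omega
  have hzero := h k hk2
  have h2 := hrep (k : ℤ)
  push_cast at h2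
  rw [h2] at hzero
  simpa [zpow_natCast] using hzero

lemma Fc_mul_eq_gS {n : ℕ} (aI r : Fin n → ℝ) (Ω : Set ℝ)
    (hΩ : Ω = ⋃ j, Set.Ico (aI j) (aI j + r j))
    (hr : ∀ j, 0 < r j)
    (hdisj : Pairwise fun i j =>
      Disjoint (Set.Ico (aI i) (aI i + r i)) (Set.Ico (aI j) (aI j + r j)))
    (hvol : volume Ω = 1)
    (ξ : ℝ) (hξ : ξ ≠ 0) :
    Fc Ω ξ * (2 * (Real.pi : ℂ) * Complex.I * (ξ : ℂ)) = gS aI r ξ := by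
  set c : ℂ := 2 * (Real.pi : ℂ) * Complex.I * (ξ : ℂ) with hcdef
  have hcne : c ≠ 0 := twoPiIxi_ne ξ hξ
  have hFsum : Fc Ω ξ = ∑ j, ∫ x in Set.Ico (aI j) (aI j + r j), Complex.exp (c * x) := by
    rw [Fc, hΩ]
    rw [integral_iUnion (fun j => measurableSet_Ico) hdisj
        (by
          rw [← hΩ]
          exact integrableOn_exp' ξ (by rw [hvol]; exact ENNReal.one_ne_top))]
    rw [tsum_fintype]
  rw [hFsum, Finset.sum_mul, gS]
  refine Finset.sum_congr rfl fun j _ => ?_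
  have hIcoIoc : ∫ x in Set.Ico (aI j) (aI j + r j), Complex.exp (c * x)
      = ∫ x in (aI j)..(aI j + r j), Complex.exp (c * x) := by
    rw [intervalIntegral.integral_of_le (by linarith [hr j])]
    rw [MeasureTheory.integral_Ico_eq_integral_Ioo, MeasureTheory.integral_Ioc_eq_integral_Ioo]
  rw [hIcoIoc, integral_exp_mul_complex hcne]
  field_simp
  rw [hcdef]; push_cast; ring_nf


set_option maxHeartbeats 1000000 in
theorem stmt10 (n : ℕ) (hn : 0 < n) (aI r : Fin n → ℝ)
    (hr : ∀ j, 0 < r j) (hsum : ∑ j, r j = 1)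
    (hdisj : Pairwise fun i j =>
      Disjoint (Set.Ico (aI i) (aI i + r i)) (Set.Ico (aI j) (aI j + r j)))
    (Ω : Set ℝ) (hΩ : Ω = ⋃ j, Set.Ico (aI j) (aI j + r j))
    (Λ : Set ℝ) (hspec : IsSpectrum Ω Λ) (h0 : (0 : ℝ) ∈ Λ)
    (a d : ℝ) (hd : 0 < d)
    (hAP : ∀ i : ℕ, i < 2 * n → a + i * d ∈ Λ) :
    (∀ k : ℤ, a + k * d ∈ Λ) ∧
    (∃ m : ℕ, 0 < m ∧ d = m) ∧
    (∀ᵐ x : ℝ ∂volume, ∑' k : ℤ, Ω.indicator (fun _ => (1 : ℝ)) (x + k / d) = d) := by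
  classical
  obtain ⟨horth, hcomp⟩ := hspec
  haveI : Nonempty (Fin n) := Fin.pos_iff_nonempty.mp hn
  have hmeas : MeasurableSet Ω := by
    rw [hΩ]; exact MeasurableSet.iUnion fun j => measurableSet_Ico
  have hvol : volume Ω = 1 := by
    rw [hΩ, measure_iUnion hdisj fun j => measurableSet_Ico]
    simp only [Real.volume_Ico, add_sub_cancel_left]
    rw [tsum_fintype, ← ENNReal.ofReal_sum_of_nonneg fun j _ => (hr j).le, hsum,
      ENNReal.ofReal_one]
  have hFo : ∀ l ∈ Λ, ∀ m ∈ Λ, l ≠ m → Fc Ω (l - m) = 0 := by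
    intro l hl m hm hne
    have hh := horth l hl m hm hne
    rw [Fc]
    push_cast
    exact hh
  have hFg : ∀ ξ : ℝ, ξ ≠ 0 →
      Fc Ω ξ * (2 * (Real.pi : ℂ) * Complex.I * (ξ : ℂ)) = gS aI r ξ :=
    fun ξ hξ => Fc_mul_eq_gS aI r Ω hΩ hr hdisj hvol ξ hξ
  have hΛg : ∀ t1 ∈ Λ, ∀ t2 ∈ Λ, gS aI r (t1 - t2) = 0 := by
    intro t1 h1 t2 h2
    rcases eq_or_ne t1 t2 with rfl | hne
    · rw [sub_self]; exact gS_zero aI r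
    · have h3 := hFg (t1 - t2) (sub_ne_zero.mpr hne)
      rw [hFo t1 h1 t2 h2 hne, zero_mul] at h3
      exact h3.symm
  have haΛ : a ∈ Λ := by simpa using hAP 0 (by omega)
  have hprop : ∀ lam ∈ Λ, ∀ k : ℤ, gS aI r (a + k * d - lam) = 0 := by
    intro lam hlam
    have base : ∀ k : ℕ, k < 2 * n → gS aI r ((a - lam) + k * d) = 0 := by
      intro k hk
      rw [show (a - lam) + (k : ℝ) * d = (a + k * d) - lam by ring]
      exact hΛg _ (hAP k hk) lam hlam
    intro k
    have h5 := g_propagate aI r (a - lam) d base k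
    rwa [show a - lam + (k : ℝ) * d = a + k * d - lam by ring] at h5
  have hFAP : ∀ lam ∈ Λ, ∀ k : ℤ, a + k * d ≠ lam → Fc Ω (a + k * d - lam) = 0 := by
    intro lam hlam k hne
    have h6 := hFg (a + k * d - lam) (sub_ne_zero.mpr hne)
    rw [hprop lam hlam k] at h6
    rcases mul_eq_zero.mp h6 with h7 | h7
    · exact h7
    · exact absurd h7 (twoPiIxi_ne _ (sub_ne_zero.mpr hne))
  have hFzero : ∀ k : ℤ, k ≠ 0 → Fc Ω ((k : ℝ) * d) = 0 := by
    intro k hk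
    have hne : a + (k : ℝ) * d ≠ a := by
      intro hcon
      have hkd : (k : ℝ) * d = 0 := by linarith
      rcases mul_eq_zero.mp hkd with h8 | h8
      · exact hk (by exact_mod_cast h8)
      · exact (ne_of_gt hd) h8
    have h8 := hFAP a haΛ k hne
    rwa [show a + (k : ℝ) * d - a = (k : ℝ) * d by ring] at h8
  have part1 : ∀ k : ℤ, a + k * d ∈ Λ := by
    intro k
    by_contra hk
    set f : ℝ → ℂ :=
      fun x => Complex.exp (2 * (Real.pi : ℂ) * Complex.I * ((a + k * d : ℝ) : ℂ) * (x : ℂ)) with hf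
    have hfin : volume Ω ≠ ⊤ := by rw [hvol]; exact ENNReal.one_ne_top
    haveI : IsFiniteMeasure (volume.restrict Ω) :=
      ⟨by rwa [Measure.restrict_apply_univ, lt_top_iff_ne_top]⟩
    have hmem : MemLp f 2 (volume.restrict Ω) := by
      apply MemLp.of_bound (Continuous.aestronglyMeasurable (by continuity)) 1
      exact Filter.Eventually.of_forall fun x => le_of_eq (norm_exp_eq_one _ x)
    have hperp : ∀ l ∈ Λ,
        (∫ x in Ω, f x * Complex.exp (-(2 * (Real.pi : ℂ) * Complex.I * (l : ℂ) * (x : ℂ)))) = 0 := by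
      intro l hl
      have hpt : ∀ x : ℝ, f x * Complex.exp (-(2 * (Real.pi : ℂ) * Complex.I * (l : ℂ) * (x : ℂ)))
          = Complex.exp (2 * (Real.pi : ℂ) * Complex.I * ((a + k * d - l : ℝ) : ℂ) * (x : ℂ)) := by
        intro x
        rw [hf, ← Complex.exp_add]
        congr 1
        push_cast
        ring
      simp_rw [hpt]
      exact hFAP l hl k (fun hcon => hk (by rwa [hcon]))
    have hzero := hcomp f hmem hperp
    have hno : ∀ x : ℝ, f x ≠ 0 := fun x => Complex.exp_ne_zero _
    rw [Filter.EventuallyEq, ae_iff] at hzero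
    simp only [Pi.zero_apply] at hzero
    have huniv : {x : ℝ | ¬ f x = 0} = Set.univ := Set.eq_univ_of_forall fun x => hno x
    rw [huniv, Measure.restrict_apply_univ, hvol] at hzero
    exact one_ne_zero hzero
  have hune : (Finset.univ : Finset (Fin n)).Nonempty := Finset.univ_nonempty
  have hsub : Ω ⊆ Set.Icc (Finset.univ.inf' hune aI)
      (Finset.univ.sup' hune fun j => aI j + r j) := by
    rw [hΩ]
    intro x hx
    obtain ⟨j, hj⟩ := Set.mem_iUnion.mp hx
    exact ⟨le_trans (Finset.inf'_le aI (Finset.mem_univ j)) hj.1,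
           le_trans (le_of_lt hj.2)
             (Finset.le_sup' (f := fun j => aI j + r j) (Finset.mem_univ j))⟩
  have hAB : (Finset.univ.inf' hune aI) ≤ (Finset.univ.sup' hune fun j => aI j + r j) := by
    obtain ⟨j⟩ := (inferInstance : Nonempty (Fin n))
    calc Finset.univ.inf' hune aI ≤ aI j := Finset.inf'_le _ (Finset.mem_univ j)
      _ ≤ aI j + r j := by linarith [hr j]
      _ ≤ _ := Finset.le_sup' (f := fun j => aI j + r j) (Finset.mem_univ j)
  obtain ⟨part2, part3⟩ := tiling_of_Fzero Ω hmeas hvol _ _ hAB hsub d hd hFzero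
  exact ⟨part1, part2, part3⟩
end

section
/- Let Ω₄ = [0,2] ∪ [M, M+1] ∪ [N, N+1] with M, N integers making the intervals disjoint. Then 2πiλ · χ̂_{Ω₄}(λ) = (e^{2πiλ} − 1)(1 + e^{2πiλ} + e^{2πiλM} + e^{2πiλN}), and the set Z¹ = {λ : 1 + e^{2πiλ} = 0 and e^{2πiλN} + e^{2πiλM} = 0} is nonempty if and only if M − N is odd, in which case Z¹ = ℤ + 1/2. -/
open MeasureTheory Complex

lemma intIcc (c : ℂ) (hc : c ≠ 0) (a b : ℝ) (hab : a ≤ b) :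
    ∫ x in Set.Icc a b, Complex.exp (c * x) =
      (Complex.exp (c * b) - Complex.exp (c * a)) / c := by
  rw [MeasureTheory.integral_Icc_eq_integral_Ioc, ← intervalIntegral.integral_of_le hab,
    integral_exp_mul_complex hc]

lemma exp_half (l : ℝ) : 1 + Complex.exp (2 * (Real.pi : ℂ) * Complex.I * (l : ℂ)) = 0 ↔
    ∃ k : ℤ, l = k + 1/2 := by
  have hπI : (Real.pi : ℂ) * Complex.I ≠ 0 :=
    mul_ne_zero (by exact_mod_cast Real.pi_ne_zero) Complex.I_ne_zero
  rw [add_comm, add_eq_zero_iff_eq_neg, ← Complex.exp_pi_mul_I, Complex.exp_eq_exp_iff_exists_int]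
  constructor
  · rintro ⟨n, hn⟩
    refine ⟨n, ?_⟩
    have h1 : ((Real.pi : ℂ) * Complex.I) * (2 * l) = ((Real.pi : ℂ) * Complex.I) * (1 + 2 * n) := by
      linear_combination hn
    have h2 : (2 * l : ℂ) = 1 + 2 * n := mul_left_cancel₀ hπI h1
    have h3 : (2 * l : ℝ) = 1 + 2 * n := by exact_mod_cast h2
    linarith
  · rintro ⟨k, hk⟩
    exact ⟨k, by push_cast [hk]; ring⟩

lemma exp_int (k m : ℤ) (l : ℝ) (hl : l = k + 1/2) :
    Complex.exp (2 * (Real.pi : ℂ) * Complex.I * (l : ℂ) * ((m : ℝ) : ℂ)) = (-1 : ℂ) ^ m := by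
  have : 2 * (Real.pi : ℂ) * Complex.I * (l : ℂ) * ((m : ℝ) : ℂ) =
      ((k * m : ℤ) : ℂ) * (2 * Real.pi * Complex.I) + (m : ℤ) * (Real.pi * Complex.I) := by
    push_cast [hl]; ring
  rw [this, Complex.exp_add, Complex.exp_int_mul_two_pi_mul_I, one_mul,
    Complex.exp_int_mul, Complex.exp_pi_mul_I]

lemma neg_pow_sum (M N : ℤ) : (-1 : ℂ) ^ N + (-1 : ℂ) ^ M = 0 ↔ Odd (M - N) := by
  have hne : (-1 : ℂ) ≠ 0 := by norm_num
  have hM : (-1 : ℂ) ^ M = (-1 : ℂ) ^ N * (-1 : ℂ) ^ (M - N) := by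
    rw [← zpow_add₀ hne]; ring_nf
  rcases Int.even_or_odd (M - N) with he | ho
  · simp only [he.neg_one_zpow] at hM
    rw [hM]
    simp only [mul_one]
    constructor
    · intro h
      exfalso
      have : (2 : ℂ) * (-1) ^ N = 0 := by linear_combination h
      simp [zpow_ne_zero N hne] at this
    · intro h; exact absurd h (by simp [Int.not_odd_iff_even.mpr he])
  · simp [hM, ho.neg_one_zpow, ho]

theorem stmt16 (M N : ℤ)
    (hd1 : Disjoint (Set.Icc (0 : ℝ) 2) (Set.Icc (M : ℝ) (M + 1)))
    (hd2 : Disjoint (Set.Icc (0 : ℝ) 2) (Set.Icc (N : ℝ) (N + 1)))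
    (hd3 : Disjoint (Set.Icc (M : ℝ) (M + 1)) (Set.Icc (N : ℝ) (N + 1))) :
    (∀ l : ℝ, (2 * (Real.pi : ℂ) * Complex.I * (l : ℂ)) *
        (∫ x in Set.Icc (0 : ℝ) 2 ∪ Set.Icc (M : ℝ) (M + 1) ∪ Set.Icc (N : ℝ) (N + 1),
          Complex.exp (2 * (Real.pi : ℂ) * Complex.I * (l : ℂ) * (x : ℂ))) =
      (Complex.exp (2 * (Real.pi : ℂ) * Complex.I * (l : ℂ)) - 1) *
        (1 + Complex.exp (2 * (Real.pi : ℂ) * Complex.I * (l : ℂ)) +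
          Complex.exp (2 * (Real.pi : ℂ) * Complex.I * (l : ℂ) * ((M : ℝ) : ℂ)) +
          Complex.exp (2 * (Real.pi : ℂ) * Complex.I * (l : ℂ) * ((N : ℝ) : ℂ)))) ∧
    ((∃ l : ℝ, 1 + Complex.exp (2 * (Real.pi : ℂ) * Complex.I * (l : ℂ)) = 0 ∧
        Complex.exp (2 * (Real.pi : ℂ) * Complex.I * (l : ℂ) * ((N : ℝ) : ℂ)) +
          Complex.exp (2 * (Real.pi : ℂ) * Complex.I * (l : ℂ) * ((M : ℝ) : ℂ)) = 0) ↔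
      Odd (M - N)) ∧
    (Odd (M - N) →
      {l : ℝ | 1 + Complex.exp (2 * (Real.pi : ℂ) * Complex.I * (l : ℂ)) = 0 ∧
          Complex.exp (2 * (Real.pi : ℂ) * Complex.I * (l : ℂ) * ((N : ℝ) : ℂ)) +
            Complex.exp (2 * (Real.pi : ℂ) * Complex.I * (l : ℂ) * ((M : ℝ) : ℂ)) = 0} =
        {l : ℝ | ∃ k : ℤ, l = k + 1 / 2}) := by
  refine ⟨?_, ⟨?_, ?_⟩, ?_⟩
  · intro l
    by_cases hl : l = 0
    · simp [hl]
    · set c : ℂ := 2 * (Real.pi : ℂ) * Complex.I * (l : ℂ) with hc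
      have hcne : c ≠ 0 := by
        refine mul_ne_zero (mul_ne_zero (mul_ne_zero two_ne_zero ?_) Complex.I_ne_zero) ?_
        · exact_mod_cast Real.pi_ne_zero
        · exact_mod_cast hl
      have hint : ∀ a b : ℝ, IntegrableOn (fun x : ℝ => Complex.exp (c * x)) (Set.Icc a b) := by
        intro a b
        exact (Complex.continuous_exp.comp (continuous_const.mul Complex.continuous_ofReal)).integrableOn_Icc
      rw [setIntegral_union (Set.disjoint_union_left.mpr ⟨hd2, hd3⟩) measurableSet_Icc
            ((hint 0 2).union (hint M (M+1))) (hint N (N+1)),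
          setIntegral_union hd1 measurableSet_Icc (hint 0 2) (hint M (M+1)),
          intIcc c hcne 0 2 (by norm_num), intIcc c hcne M (M+1) (by linarith),
          intIcc c hcne N (N+1) (by linarith),
          ← add_div, ← add_div, mul_div_assoc', mul_comm c,
          mul_div_assoc, div_self hcne, mul_one]
      push_cast
      rw [mul_zero, Complex.exp_zero,
          show c * 2 = c + c by ring, show c * ((M:ℂ)+1) = c * M + c by ring,
          show c * ((N:ℂ)+1) = c * N + c by ring]
      simp only [Complex.exp_add]
      ring
  · rintro ⟨l, h1, h2⟩
    obtain ⟨k, hk⟩ := (exp_half l).mp h1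
    rw [exp_int k N l hk, exp_int k M l hk] at h2
    exact (neg_pow_sum M N).mp h2
  · intro hodd
    refine ⟨1/2, (exp_half _).mpr ⟨0, by norm_num⟩, ?_⟩
    rw [exp_int 0 N (1/2) (by norm_num), exp_int 0 M (1/2) (by norm_num)]
    exact (neg_pow_sum M N).mpr hodd
  · intro hodd
    ext l
    simp only [Set.mem_setOf_eq]
    constructor
    · rintro ⟨h1, _⟩; exact (exp_half l).mp h1
    · rintro ⟨k, hk⟩
      refine ⟨(exp_half l).mpr ⟨k, hk⟩, ?_⟩
      rw [exp_int k N l hk, exp_int k M l hk]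
      exact (neg_pow_sum M N).mpr hodd
end
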